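/- The 4×4 Hermitian matrix Θ from the N=4 Bose-Hubbard model with β=δ=κ=0 is positive definite for all real γ with |γ| < 1/√2, and fails to be invertible at γ = 1/√2. -/

import Mathlib

open Complex Matrix ComplexOrder

noncomputable def Theta4 (γ : ℝ) : Matrix (Fin 4) (Fin 4) ℂ :=
  !![1, I * Real.sqrt 3 * γ, 0, 2 * I * γ ^ 3;
     -(I * Real.sqrt 3 * γ), ((1 + 4 * γ ^ 2 : ℝ) : ℂ), 2 * I * γ * (1 + (γ : ℂ) ^ 2), 0;
     0, -(2 * I * γ * (1 + (γ : ℂ) ^ 2)), ((1 + 4 * γ ^ 2 : ℝ) : ℂ), I * Real.sqrt 3 * γ;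
     -(2 * I * γ ^ 3), 0, -(I * Real.sqrt 3 * γ), 1]

noncomputable def L4 (γ : ℝ) : Matrix (Fin 4) (Fin 4) ℂ :=
  !![1, 0, 0, 0;
     -(I * Real.sqrt 3 * γ), 1, 0, 0;
     0, -(2 * I * γ), 1, 0;
     -(2 * I * γ ^ 3), -(2 * Real.sqrt 3 * γ ^ 4 / (1 + (γ : ℂ) ^ 2)), -(I * Real.sqrt 3 * γ), 1]

noncomputable def d4 (γ : ℝ) : Fin 4 → ℝ :=
  ![1, 1 + γ ^ 2, 1 - 4 * γ ^ 4, (1 - 4 * γ ^ 4) * (1 - γ ^ 2) ^ 2 / (1 + γ ^ 2)]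

lemma posDef_of_LDL {n : Type*} [Fintype n] [DecidableEq n]
    {M D L : Matrix n n ℂ} (hD : D.PosDef) (hL : IsUnit L)
    (h : M = L * D * Lᴴ) : M.PosDef := by
  rw [posDef_iff_dotProduct_mulVec]
  constructor
  · rw [h]
    show (L * D * Lᴴ)ᴴ = L * D * Lᴴ
    simp [conjTranspose_mul, hD.1.eq, Matrix.mul_assoc]
  · intro x hx
    have hLH : IsUnit (Lᴴ) := by rwa [← Matrix.isUnit_conjTranspose] at hL
    have hx' : Lᴴ *ᵥ x ≠ 0 := by
      intro h0
      apply hx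
      have hinj := Matrix.mulVec_injective_iff_isUnit.mpr hLH
      have : Lᴴ *ᵥ x = Lᴴ *ᵥ 0 := by simpa using h0
      exact hinj this
    have key : star x ⬝ᵥ (M *ᵥ x) = star (Lᴴ *ᵥ x) ⬝ᵥ (D *ᵥ (Lᴴ *ᵥ x)) := by
      rw [h, star_mulVec, conjTranspose_conjTranspose, ← Matrix.mulVec_mulVec,
        ← Matrix.mulVec_mulVec, dotProduct_mulVec]
    rw [key]
    exact hD.dotProduct_mulVec_pos hx'

set_option maxHeartbeats 2000000 in
lemma factorization4 (γ : ℝ) :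
    Theta4 γ = L4 γ * Matrix.diagonal (fun i => ((d4 γ i : ℝ) : ℂ)) * (L4 γ)ᴴ := by
  have hs3 : ((Real.sqrt 3 : ℝ) : ℂ) ^ 2 = 3 := by
    norm_cast
    rw [Real.sq_sqrt] <;> norm_num
  have hne : (1 + (γ : ℂ) ^ 2) ≠ 0 := by
    have : ((1 + γ ^ 2 : ℝ) : ℂ) ≠ 0 := by
      rw [Complex.ofReal_ne_zero]; nlinarith [sq_nonneg γ]
    simpa using this
  rw [Matrix.mul_assoc]
  ext i j
  fin_cases i <;> fin_cases j <;>
    · simp [Theta4, L4, d4, Matrix.mul_apply, Matrix.diagonal_mul, Fin.sum_univ_four,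
        Matrix.conjTranspose_apply, Complex.I_sq, map_ofNat, hs3]
      try push_cast
      try ring
      try field_simp
      try ring_nf
      try simp [hs3]
      try ring

lemma isUnit_L4 (γ : ℝ) : IsUnit (L4 γ) := by
  rw [Matrix.isUnit_iff_isUnit_det]
  have : (L4 γ).det = 1 := by
    simp [L4, Matrix.det_succ_row_zero, Fin.sum_univ_succ]
  rw [this]
  exact isUnit_one

lemma d4_pos {γ : ℝ} (hγ : |γ| < 1 / Real.sqrt 2) (i : Fin 4) : 0 < d4 γ i := by
  have hs2 : Real.sqrt 2 ^ 2 = 2 := Real.sq_sqrt (by norm_num)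
  have hs2pos : (0:ℝ) < Real.sqrt 2 := Real.sqrt_pos.mpr (by norm_num)
  have hg2 : γ ^ 2 < 1 / 2 := by
    have h1 : |γ| ^ 2 < (1 / Real.sqrt 2) ^ 2 := by
      exact pow_lt_pow_left₀ hγ (abs_nonneg γ) (by norm_num)
    rw [_root_.sq_abs, div_pow, one_pow, hs2] at h1
    exact h1
  have hgsq : (0:ℝ) ≤ γ ^ 2 := sq_nonneg γ
  fin_cases i <;> simp [d4]
  · nlinarith
  · nlinarith
  · apply div_pos
    · apply mul_pos
      · nlinarith
      · nlinarith
    · nlinarith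

theorem stmt11 :
    (∀ γ : ℝ, |γ| < 1 / Real.sqrt 2 → (Theta4 γ).PosDef) ∧
    ¬ IsUnit (Theta4 (1 / Real.sqrt 2)) := by
  constructor
  · intro γ hγ
    refine posDef_of_LDL ?_ (isUnit_L4 γ) (factorization4 γ)
    apply Matrix.PosDef.diagonal
    intro i
    have := d4_pos hγ i
    exact Complex.zero_lt_real.mpr this
  · intro hU
    set γ0 : ℝ := 1 / Real.sqrt 2 with hγ0
    have hs2 : ((Real.sqrt 2 : ℝ) : ℂ) ^ 2 = 2 := by
      norm_cast; rw [Real.sq_sqrt] <;> norm_num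
    have hs3 : ((Real.sqrt 3 : ℝ) : ℂ) ^ 2 = 3 := by
      norm_cast; rw [Real.sq_sqrt] <;> norm_num
    have hne2 : ((Real.sqrt 2 : ℝ) : ℂ) ≠ 0 := by
      simp only [ne_eq, Complex.ofReal_eq_zero]
      positivity
    set v : Fin 4 → ℂ := ![-(Real.sqrt 3 : ℂ), -(I * Real.sqrt 2), 1, 0] with hv
    have hker : Theta4 γ0 *ᵥ v = 0 := by
      ext i
      fin_cases i <;>
        · simp [Theta4, Matrix.mulVec, dotProduct, Fin.sum_univ_four, hv, hγ0]
          push_cast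
          field_simp
          first
          | linear_combination (-(((Real.sqrt 3:ℝ):ℂ))) * Complex.I_sq
          | linear_combination (2*I*((Real.sqrt 2:ℝ):ℂ)^2) * hs3 +
              (-(6*I*((Real.sqrt 2:ℝ):ℂ)^2) - 2*I) * hs2
          | linear_combination (4 + 4*((Real.sqrt 2:ℝ):ℂ)^2) * Complex.I_sq +
              2 * hs2
          | linear_combination (-(I*((Real.sqrt 3:ℝ):ℂ))) * hs2
    have hinj := Matrix.mulVec_injective_iff_isUnit.mpr hU
    have h0 : v = 0 := hinj (by simpa using hker)
    have := congrFun h0 2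
    simp [hv] at this
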